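/- For the Wigner semicircle density ρ(E) = √(4−E²)/(2π) on [−2,2], the functions a(x) = 0 and b(x) = √(1−x) for x ∈ [0,1] solve the integral equation ρ(E) = ∫₀¹ dx · H(4b(x)² − (E−a(x))²) / (π √(4b(x)² − (E−a(x))²)), where H is the Heaviside step function. -/

import Mathlib

/-- Heaviside step function: `1` for positive arguments, `0` otherwise. -/
noncomputable def Heaviside (t : ℝ) : ℝ := if 0 < t then 1 else 0

lemma heaviside_div (u : ℝ) :
    Heaviside u / (Real.pi * Real.sqrt u) = 1 / (Real.pi * Real.sqrt u) := by
  unfold Heaviside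
  by_cases h : 0 < u
  · simp [h]
  · push_neg at h
    simp [h, Real.sqrt_eq_zero_of_nonpos h]

/-- `a(x) = 0`, `b(x) = √(1−x)` solve the integral equation relating the Lanczos
coefficients to the Wigner semicircle density `ρ(E) = √(4−E²)/(2π)`. -/
theorem semicircle_integral_equation (E : ℝ) (hE : |E| ≤ 2) :
    (∫ x in (0 : ℝ)..1,
        Heaviside (4 * Real.sqrt (1 - x) ^ 2 - (E - 0) ^ 2) /
          (Real.pi * Real.sqrt (4 * Real.sqrt (1 - x) ^ 2 - (E - 0) ^ 2))) =
      Real.sqrt (4 - E ^ 2) / (2 * Real.pi) := by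
  have hE2 : E ^ 2 ≤ 4 := by
    nlinarith [abs_nonneg E, sq_abs E]
  set c : ℝ := 4 - E ^ 2 with hc
  have hc0 : 0 ≤ c := by linarith
  set F : ℝ → ℝ := fun u => Heaviside u / (Real.pi * Real.sqrt u) with hF
  -- Step 1: rewrite the integrand
  have step1 : (∫ x in (0 : ℝ)..1,
        Heaviside (4 * Real.sqrt (1 - x) ^ 2 - (E - 0) ^ 2) /
          (Real.pi * Real.sqrt (4 * Real.sqrt (1 - x) ^ 2 - (E - 0) ^ 2)))
      = ∫ x in (0 : ℝ)..1, F (-4 * x + c) := by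
    apply intervalIntegral.integral_congr
    intro x hx
    rw [Set.uIcc_of_le (by norm_num : (0:ℝ) ≤ 1)] at hx
    have h1x : 0 ≤ 1 - x := by linarith [hx.2]
    have : 4 * Real.sqrt (1 - x) ^ 2 - (E - 0) ^ 2 = -4 * x + c := by
      rw [Real.sq_sqrt h1x]; ring
    simp only [this, hF]
  rw [step1]
  rw [intervalIntegral.integral_comp_mul_add F (by norm_num : (-4:ℝ) ≠ 0) c]
  have hends : -4 * (1:ℝ) + c = -E ^ 2 := by ring
  rw [mul_zero, zero_add, hends]
  -- the integral from c to -E² reversed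
  rw [intervalIntegral.integral_symm]
  -- Now compute ∫ u in -E²..c, F u  by splitting at 0
  have hFzero : ∀ u ≤ (0:ℝ), F u = 0 := by
    intro u hu
    simp [hF, Heaviside, not_lt.mpr hu]
  have int1 : IntervalIntegrable F MeasureTheory.volume (-E ^ 2) 0 := by
    apply (intervalIntegrable_const (c := (0:ℝ))).congr
    intro u hu
    rcases Set.mem_uIoc.mp hu with h | h
    · exact (hFzero u h.2).symm
    · exact (hFzero u (h.2.trans (by nlinarith [sq_nonneg E]))).symm
  have key2 : Set.EqOn F (fun u : ℝ => Real.pi⁻¹ * u ^ (-(1/2) : ℝ)) (Set.uIcc 0 c) := by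
    intro u hu
    rw [Set.uIcc_of_le hc0] at hu
    rcases eq_or_lt_of_le hu.1 with h | h
    · rw [← h]
      simp [hF, Heaviside, Real.zero_rpow (by norm_num : (-(1/2):ℝ) ≠ 0)]
    · have hs : Real.sqrt u = u ^ ((1/2) : ℝ) := Real.sqrt_eq_rpow u
      simp only [hF, heaviside_div, hs]
      rw [Real.rpow_neg (le_of_lt h)]
      field_simp
  have int2 : IntervalIntegrable F MeasureTheory.volume 0 c := by
    apply ((intervalIntegral.intervalIntegrable_rpow' (by norm_num : (-1:ℝ) < -(1/2))).const_mul
      Real.pi⁻¹).congr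
    intro u hu
    exact (key2 (Set.uIoc_subset_uIcc hu)).symm
  rw [← intervalIntegral.integral_add_adjacent_intervals int1 int2]
  have I1 : (∫ u in (-E ^ 2)..(0:ℝ), F u) = 0 := by
    rw [intervalIntegral.integral_congr (g := fun _ => (0:ℝ)) ?_, intervalIntegral.integral_zero]
    intro u hu
    rcases Set.mem_uIcc.mp hu with h | h
    · exact hFzero u h.2
    · exact hFzero u (h.2.trans (by nlinarith [sq_nonneg E]))
  have I2 : (∫ u in (0:ℝ)..c, F u) = 2 * Real.sqrt c / Real.pi := by
    rw [intervalIntegral.integral_congr key2, intervalIntegral.integral_const_mul,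
      integral_rpow (Or.inl (by norm_num : (-1:ℝ) < -(1/2)))]
    have : (-(1/2) : ℝ) + 1 = 1/2 := by norm_num
    rw [this, Real.zero_rpow (by norm_num : ((1/2):ℝ) ≠ 0), Real.sqrt_eq_rpow]
    field_simp
    ring
  rw [I1, I2]
  have hpi : Real.pi ≠ 0 := Real.pi_ne_zero
  field_simp
  rw [smul_eq_mul]
  have hpc : 2 * Real.sqrt c / Real.pi * Real.pi = 2 * Real.sqrt c := div_mul_cancel₀ _ hpi
  linear_combination (1/2 : ℝ) * hpc
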